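/- If (φ₁(t), v₁(t), v₂(t)) is a solution of the reduced Ziegler pendulum system φ₁' = v₁, v₁' = (r₁ - (A₁₂/A₂₂)r₂)/(A₁₁ - A₁₂A₂₁/A₂₂), v₂' = (r₂ - (A₂₁/A₁₁)r₁)/(A₂₂ - A₁₂A₂₁/A₁₁), then (-φ₁(-t), v₁(-t), v₂(-t)) is also a solution of the same system. -/

import Mathlib

/-- Mass-matrix entry `A₁₁` of the Ziegler pendulum. -/
noncomputable def A11 (m1 m3 l1 l3 : ℝ) : ℝ := m1 * l1 ^ 2 + m3 * l3 ^ 2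

/-- Mass-matrix entry `A₁₂ = A₂₁`. -/
noncomputable def A12 (m1 m3 l1 l2 l3 φ : ℝ) : ℝ :=
  m1 * l1 ^ 2 + m3 * l3 ^ 2 + (m1 * l1 - m3 * l3) * l2 * Real.cos φ

/-- Mass-matrix entry `A₂₂`. -/
noncomputable def A22 (m1 m2 m3 l1 l2 l3 φ : ℝ) : ℝ :=
  (m1 + m2 + m3) * l2 ^ 2 + m1 * l1 ^ 2 + m3 * l3 ^ 2 +
    2 * (m1 * l1 - m3 * l3) * l2 * Real.cos φ

/-- Right-hand side `r₁`. -/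
noncomputable def r1 (m1 m3 l1 l2 l3 k1 φ v2 : ℝ) : ℝ :=
  -k1 * φ - (m1 * l1 - m3 * l3) * l2 * v2 ^ 2 * Real.sin φ

/-- Right-hand side `r₂` (with `k₂ = 0`). -/
noncomputable def r2 (m1 m3 l1 l2 l3 F φ v1 v2 : ℝ) : ℝ :=
  -F * l1 * Real.sin φ + (m1 * l1 - m3 * l3) * l2 * v1 * (v1 + 2 * v2) * Real.sin φ

/-- RHS of the equation for `v₁'` in the reduced system. -/
noncomputable def rhs1 (m1 m2 m3 l1 l2 l3 k1 F φ v1 v2 : ℝ) : ℝ :=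
  (r1 m1 m3 l1 l2 l3 k1 φ v2 -
      A12 m1 m3 l1 l2 l3 φ / A22 m1 m2 m3 l1 l2 l3 φ * r2 m1 m3 l1 l2 l3 F φ v1 v2) /
    (A11 m1 m3 l1 l3 -
      A12 m1 m3 l1 l2 l3 φ * A12 m1 m3 l1 l2 l3 φ / A22 m1 m2 m3 l1 l2 l3 φ)

/-- RHS of the equation for `v₂'` in the reduced system. -/
noncomputable def rhs2 (m1 m2 m3 l1 l2 l3 k1 F φ v1 v2 : ℝ) : ℝ :=
  (r2 m1 m3 l1 l2 l3 F φ v1 v2 -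
      A12 m1 m3 l1 l2 l3 φ / A11 m1 m3 l1 l3 * r1 m1 m3 l1 l2 l3 k1 φ v2) /
    (A22 m1 m2 m3 l1 l2 l3 φ -
      A12 m1 m3 l1 l2 l3 φ * A12 m1 m3 l1 l2 l3 φ / A11 m1 m3 l1 l3)


lemma rhs1_odd (m1 m2 m3 l1 l2 l3 k1 F φ v1 v2 : ℝ) :
    rhs1 m1 m2 m3 l1 l2 l3 k1 F (-φ) v1 v2 = -rhs1 m1 m2 m3 l1 l2 l3 k1 F φ v1 v2 := by
  simp only [rhs1, r1, r2, A11, A12, A22, Real.cos_neg, Real.sin_neg]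
  rw [← neg_div]
  ring_nf

lemma rhs2_odd (m1 m2 m3 l1 l2 l3 k1 F φ v1 v2 : ℝ) :
    rhs2 m1 m2 m3 l1 l2 l3 k1 F (-φ) v1 v2 = -rhs2 m1 m2 m3 l1 l2 l3 k1 F φ v1 v2 := by
  simp only [rhs2, r1, r2, A11, A12, A22, Real.cos_neg, Real.sin_neg]
  rw [← neg_div]
  ring_nf

/-- Reversibility of the reduced Ziegler pendulum system: if `(φ₁, v₁, v₂)` is a
solution, then so is `(-φ₁(-t), v₁(-t), v₂(-t))`. -/
theorem ziegler_reversible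
    (m1 m2 m3 l1 l2 l3 k1 F : ℝ)
    (hm1 : 0 < m1) (hm2 : 0 < m2) (hm3 : 0 < m3)
    (hl1 : 0 < l1) (hl2 : 0 < l2) (hl3 : 0 < l3)
    (φ v1 v2 : ℝ → ℝ)
    (hφ : ∀ t, HasDerivAt φ (v1 t) t)
    (hv1 : ∀ t, HasDerivAt v1 (rhs1 m1 m2 m3 l1 l2 l3 k1 F (φ t) (v1 t) (v2 t)) t)
    (hv2 : ∀ t, HasDerivAt v2 (rhs2 m1 m2 m3 l1 l2 l3 k1 F (φ t) (v1 t) (v2 t)) t) :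
    (∀ t, HasDerivAt (fun s => -φ (-s)) (v1 (-t)) t) ∧
    (∀ t, HasDerivAt (fun s => v1 (-s))
      (rhs1 m1 m2 m3 l1 l2 l3 k1 F (-φ (-t)) (v1 (-t)) (v2 (-t))) t) ∧
    (∀ t, HasDerivAt (fun s => v2 (-s))
      (rhs2 m1 m2 m3 l1 l2 l3 k1 F (-φ (-t)) (v1 (-t)) (v2 (-t))) t) := by
  refine ⟨fun t => ?_, fun t => ?_, fun t => ?_⟩
  · simpa [Function.comp_def, Pi.neg_def] using ((hφ (-t)).comp t (hasDerivAt_neg t)).neg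
  · have h := (hv1 (-t)).comp t (hasDerivAt_neg t)
    simpa [rhs1_odd, Function.comp_def] using h
  · have h := (hv2 (-t)).comp t (hasDerivAt_neg t)
    simpa [rhs2_odd, Function.comp_def] using h
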